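/- Let s ≥ 1 and let F = GF(2^s). Let σ be a finite type of variables with |σ| = m ≥ 1, let R ≥ 1 and L ≥ 1 be integers, and for each i : Fin L let d_i : σ →₀ ℕ satisfy ∑_x d_i(x) = R and d_i(x) ≤ 2 for every x, and let Q_i := monomial d_i 1 ∈ MvPolynomial σ F. Suppose d_0(x) ≤ 1 for every x and d_i ≠ d_0 for every i ≠ 0, and let p := ∑_{i : Fin L} Q_i. Then the number of assignments v : σ → F with v x ≠ 0 for every x and eval v p = 0 is at most R · (2^s − 1)^(m − 1). Equivalently, if the variables are assigned i.i.d. uniform values from F \ {0}, then Pr(p evaluates to 0) ≤ R / (2^s − 1). -/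

import Mathlib

open MvPolynomial Finset

set_option maxHeartbeats 1000000

lemma sz_aux {F : Type*} [Field F] [DecidableEq F] (S : Finset F) :
    ∀ (n : ℕ) (p : MvPolynomial (Fin n) F), p ≠ 0 →
      ((Fintype.piFinset fun _ : Fin n => S).filter fun v => eval v p = 0).card * S.card
        ≤ p.totalDegree * S.card ^ n := by
  intro n
  induction n with
  | zero =>
    intro p hp
    obtain ⟨a, rfl⟩ := MvPolynomial.C_surjective (Fin 0) p
    have ha : a ≠ 0 := by rintro rfl; simp at hp
    have : ((Fintype.piFinset fun _ : Fin 0 => S).filter fun v => eval v (C a) = 0) = ∅ := by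
      ext v; simp [ha]
    simp [this]
    exact Or.inl ha
  | succ n ih =>
    intro p hp
    set q := finSuccEquiv F n p with hqdef
    have hq : q ≠ 0 := by
      simp only [hqdef, ne_eq, EmbeddingLike.map_eq_zero_iff]; exact hp
    set t := q.natDegree with htdef
    set c := q.coeff t with hcdef
    have hc : c ≠ 0 := by
      simpa [hcdef, htdef, Polynomial.coeff_natDegree] using
        Polynomial.leadingCoeff_ne_zero.mpr hq
    have hdeg : c.totalDegree + t ≤ p.totalDegree :=
      totalDegree_coeff_finSuccEquiv_add_le p t hc
    set A := ((Fintype.piFinset fun _ : Fin (n+1) => S).filter fun v => eval v p = 0)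
      with hA
    set Nc := ((Fintype.piFinset fun _ : Fin n => S).filter fun w => eval w c = 0)
      with hNc
    set B1 : Finset (Fin (n+1) → F) := S.biUnion fun a => Nc.image fun w => (Fin.cons a w : Fin (n+1) → F) with hB1
    set B2 : Finset (Fin (n+1) → F) :=
      (Fintype.piFinset fun _ : Fin n => S).biUnion fun w =>
        ((q.map (eval w)).roots.toFinset).image fun a => (Fin.cons a w : Fin (n+1) → F) with hB2
    have hsub : A ⊆ B1 ∪ B2 := by
      intro v hv
      rw [hA, mem_filter, Fintype.mem_piFinset] at hv
      obtain ⟨hvS, hveval⟩ := hv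
      have hcons : Fin.cons (v 0) (Fin.tail v) = v := Fin.cons_self_tail v
      have heval : Polynomial.eval (v 0) (q.map (eval (Fin.tail v))) = 0 := by
        rw [← eval_eq_eval_mv_eval', hcons]; exact hveval
      have htail : Fin.tail v ∈ (Fintype.piFinset fun _ : Fin n => S) := by
        rw [Fintype.mem_piFinset]; intro i; exact hvS _
      by_cases hcz : eval (Fin.tail v) c = 0
      · apply Finset.mem_union_left
        rw [hB1, Finset.mem_biUnion]
        refine ⟨v 0, hvS 0, ?_⟩
        rw [Finset.mem_image]
        refine ⟨Fin.tail v, ?_, hcons⟩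
        rw [hNc, mem_filter]; exact ⟨htail, hcz⟩
      · apply Finset.mem_union_right
        rw [hB2, Finset.mem_biUnion]
        refine ⟨Fin.tail v, htail, ?_⟩
        rw [Finset.mem_image]
        refine ⟨v 0, ?_, hcons⟩
        rw [Multiset.mem_toFinset, Polynomial.mem_roots']
        refine ⟨?_, heval⟩
        intro h0
        apply hcz
        have := congrArg (fun r => Polynomial.coeff r t) h0
        simpa [Polynomial.coeff_map] using this
    have hB1card : B1.card ≤ S.card * Nc.card := by
      rw [hB1]
      calc (S.biUnion fun a => Nc.image fun w => (Fin.cons a w : Fin (n+1) → F)).card ≤ ∑ a ∈ S, (Nc.image fun w => (Fin.cons a w : Fin (n+1) → F)).card := Finset.card_biUnion_le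
        _ ≤ ∑ _a ∈ S, Nc.card := Finset.sum_le_sum fun a _ => Finset.card_image_le
        _ = S.card * Nc.card := by rw [Finset.sum_const, smul_eq_mul]
    have hB2card : B2.card ≤ S.card ^ n * t := by
      rw [hB2]
      calc ((Fintype.piFinset fun _ : Fin n => S).biUnion fun w =>
          ((q.map (eval w)).roots.toFinset).image fun a => (Fin.cons a w : Fin (n+1) → F)).card ≤ ∑ w ∈ (Fintype.piFinset fun _ : Fin n => S),
          (((q.map (eval w)).roots.toFinset).image fun a => (Fin.cons a w : Fin (n+1) → F)).card :=
            Finset.card_biUnion_le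
        _ ≤ ∑ _w ∈ (Fintype.piFinset fun _ : Fin n => S), t := by
            apply Finset.sum_le_sum
            intro w _
            calc (((q.map (eval w)).roots.toFinset).image fun a => (Fin.cons a w : Fin (n+1) → F)).card
                ≤ (q.map (eval w)).roots.toFinset.card := Finset.card_image_le
              _ ≤ Multiset.card (q.map (eval w)).roots := Multiset.toFinset_card_le _
              _ ≤ (q.map (eval w)).natDegree := Polynomial.card_roots' _
              _ ≤ t := Polynomial.natDegree_map_le
        _ = S.card ^ n * t := by
            rw [Finset.sum_const, smul_eq_mul, Fintype.card_piFinset]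
            simp
    have ihc := ih c hc
    calc A.card * S.card ≤ (B1.card + B2.card) * S.card := by
          exact Nat.mul_le_mul_right _ (le_trans (Finset.card_le_card hsub)
            (Finset.card_union_le _ _))
      _ ≤ (S.card * Nc.card + S.card ^ n * t) * S.card := by
          exact Nat.mul_le_mul_right _ (Nat.add_le_add hB1card hB2card)
      _ = S.card * (Nc.card * S.card) + t * S.card ^ (n+1) := by ring
      _ ≤ S.card * (c.totalDegree * S.card ^ n) + t * S.card ^ (n+1) := by
          exact Nat.add_le_add_right (Nat.mul_le_mul_left _ ihc) _
      _ = (c.totalDegree + t) * S.card ^ (n+1) := by ring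
      _ ≤ p.totalDegree * S.card ^ (n+1) := Nat.mul_le_mul_right _ hdeg

/-- Lemma 4 of the paper: over `F = GF(2^s)`, for the polynomial
`p = ∑ i, monomial (d i) 1` as in Lemma 3, the number of assignments
`v : σ → F` with all values nonzero annihilating `p` is at most
`R * (2^s - 1)^(m - 1)`, i.e. the probability of evaluating to zero under
i.i.d. uniform nonzero values is at most `R / (2^s - 1)`. -/
theorem stmt_8 (s : ℕ) (hs : 1 ≤ s) (σ : Type*) [Fintype σ] (m : ℕ)
    (hm : Fintype.card σ = m) (hm1 : 1 ≤ m)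
    (R L : ℕ) (hR : 1 ≤ R) (hL : 0 < L)
    (d : Fin L → (σ →₀ ℕ))
    (hdeg : ∀ i : Fin L, ((d i).sum fun _ e => e) = R)
    (hle2 : ∀ (i : Fin L) (x : σ), d i x ≤ 2)
    (h0 : ∀ x : σ, d ⟨0, hL⟩ x ≤ 1)
    (hne : ∀ i : Fin L, i ≠ ⟨0, hL⟩ → d i ≠ d ⟨0, hL⟩) :
    {v : σ → GaloisField 2 s | (∀ x, v x ≠ 0) ∧
        MvPolynomial.eval v
          (∑ i : Fin L, MvPolynomial.monomial (d i) (1 : GaloisField 2 s)) = 0}.ncard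
      ≤ R * (2 ^ s - 1) ^ (m - 1) := by
  classical
  haveI : Fintype (GaloisField 2 s) := Fintype.ofFinite _
  set F := GaloisField 2 s
  set P : MvPolynomial σ F := ∑ i : Fin L, MvPolynomial.monomial (d i) 1 with hP
  -- P ≠ 0 : its coefficient at d 0 is 1
  have hcoeff : MvPolynomial.coeff (d ⟨0, hL⟩) P = 1 := by
    rw [hP, MvPolynomial.coeff_sum]
    rw [Finset.sum_eq_single (⟨0, hL⟩ : Fin L)]
    · simp [MvPolynomial.coeff_monomial]
    · intro i _ hi
      simp [MvPolynomial.coeff_monomial, hne i hi]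
    · simp
  have hP0 : P ≠ 0 := by
    intro h; rw [h] at hcoeff; simp at hcoeff
  have hPdeg : P.totalDegree ≤ R := by
    rw [hP]
    refine le_trans (MvPolynomial.totalDegree_finset_sum _ _) ?_
    apply Finset.sup_le
    intro i _
    rw [MvPolynomial.totalDegree_monomial _ (one_ne_zero)]
    exact le_of_eq (hdeg i)
  -- transfer to Fin m
  obtain e : σ ≃ Fin m := Fintype.equivFinOfCardEq hm
  set p' : MvPolynomial (Fin m) F := MvPolynomial.rename e P with hp'
  have hp'0 : p' ≠ 0 := by
    rw [hp']
    intro h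
    exact hP0 (MvPolynomial.rename_injective e e.injective (by simpa using h))
  have hp'deg : p'.totalDegree ≤ R :=
    le_trans (MvPolynomial.totalDegree_rename_le _ _) hPdeg
  set S : Finset F := Finset.univ.erase 0 with hS
  have hcardF : Fintype.card F = 2 ^ s := by
    rw [← Nat.card_eq_fintype_card]
    exact GaloisField.card 2 s (by omega)
  have hScard : S.card = 2 ^ s - 1 := by
    rw [hS, Finset.card_erase_of_mem (Finset.mem_univ _), Finset.card_univ, hcardF]
  have hSpos : 0 < S.card := by
    rw [hScard]
    have : 2 ≤ 2 ^ s := by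
      calc 2 = 2^1 := rfl
        _ ≤ 2 ^ s := Nat.pow_le_pow_right (by norm_num) hs
    omega
  set T := {v : σ → F | (∀ x, v x ≠ 0) ∧ MvPolynomial.eval v P = 0} with hT
  set A := ((Fintype.piFinset fun _ : Fin m => S).filter fun w => MvPolynomial.eval w p' = 0)
    with hA
  have hTfin : T.Finite := Set.toFinite T
  have hTA : T.ncard ≤ A.card := by
    rw [Set.ncard_eq_toFinset_card T hTfin]
    apply Finset.card_le_card_of_injOn (fun v => v ∘ e.symm)
    · intro v hv
      rw [Finset.mem_coe, Set.Finite.mem_toFinset, hT] at hv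
      obtain ⟨hv1, hv2⟩ := hv
      rw [Finset.mem_coe, hA, Finset.mem_filter]
      constructor
      · rw [Fintype.mem_piFinset]
        intro i
        rw [hS, Finset.mem_erase]
        exact ⟨hv1 _, Finset.mem_univ _⟩
      · rw [hp', MvPolynomial.eval_rename]
        have : (v ∘ e.symm) ∘ e = v := by
          ext x; simp
        rw [this]; exact hv2
    · intro v₁ _ v₂ _ h
      funext x
      have := congrFun h (e x)
      simpa using this
  have key := sz_aux S m p' hp'0
  have hAbound : A.card * S.card ≤ R * S.card ^ m := by
    calc A.card * S.card ≤ p'.totalDegree * S.card ^ m := key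
      _ ≤ R * S.card ^ m := Nat.mul_le_mul_right _ hp'deg
  have hpow : S.card ^ m = S.card ^ (m - 1) * S.card := by
    conv_lhs => rw [show m = (m-1) + 1 by omega]
    rw [pow_succ]
  have : A.card ≤ R * S.card ^ (m - 1) := by
    have h2 : A.card * S.card ≤ (R * S.card ^ (m-1)) * S.card := by
      rw [mul_assoc, ← hpow]; exact hAbound
    exact Nat.le_of_mul_le_mul_right h2 hSpos
  calc T.ncard ≤ A.card := hTA
    _ ≤ R * S.card ^ (m - 1) := this
    _ = R * (2 ^ s - 1) ^ (m - 1) := by rw [hScard]
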